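/- Let f : ℝ → ℝ, let k ∈ ℕ, and let v : Fin k → ℝ² be points such that segment ℝ (v i) (v j) ⊆ T(f) for all i, j : Fin k (i.e. the k points are pairwise visible inside the terrain region). Then convexHull ℝ (Set.range v) ⊆ T(f), i.e. the convex polygon spanned by the k points lies entirely inside the terrain region. -/

import Mathlib

/-- The Euclidean plane ℝ². -/
abbrev Plane := EuclideanSpace ℝ (Fin 2)

/-- The closed region bounded by the terrain `f` and its base (the x-axis). -/
def terrainRegion (f : ℝ → ℝ) : Set Plane := {p | 0 ≤ p 1 ∧ p 1 ≤ f (p 0)}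

lemma coord_sum {k : ℕ} (w : Fin k → ℝ) (v : Fin k → Plane) (m : Fin 2) :
    (∑ a, w a • v a) m = ∑ a, w a * v a m := by
  classical
  induction (Finset.univ : Finset (Fin k)) using Finset.induction with
  | empty => simp [PiLp.zero_apply]
  | @insert a s ha ih =>
      rw [Finset.sum_insert ha, Finset.sum_insert ha, PiLp.add_apply, PiLp.smul_apply, ih,
        smul_eq_mul]

lemma key_step (f : ℝ → ℝ) (k : ℕ) (v : Fin k → Plane)
    (hvis : ∀ i j : Fin k, segment ℝ (v i) (v j) ⊆ terrainRegion f) :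
    ∀ (n : ℕ) (w : Fin k → ℝ),
      ((Finset.univ.filter fun a => w a ≠ 0).card ≤ n) →
      (∀ a, 0 ≤ w a) → (∑ a, w a = 1) → (∑ a, w a • v a) ∈ terrainRegion f := by
  classical
  intro n
  induction n with
  | zero =>
      intro w hcard hw0 hw1
      exfalso
      have hall : ∀ a, w a = 0 := by
        intro a
        by_contra ha
        have : a ∈ Finset.univ.filter fun a => w a ≠ 0 := by simp [ha]
        have := Finset.card_pos.mpr ⟨a, this⟩
        omega
      simp [hall] at hw1
  | succ n ih =>
      intro w hcard hw0 hw1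
      obtain ⟨p, hp⟩ : ∃ p : Plane, p = ∑ a, w a • v a := ⟨_, rfl⟩
      rw [← hp]
      obtain ⟨c, hc⟩ : ∃ c : ℝ, c = p 0 := ⟨_, rfl⟩
      have hpc : ∀ m, p m = ∑ a, w a * v a m := by
        intro m; rw [hp]; exact coord_sum w v m
      -- there is a support element on each side of the vertical line x = c
      have hex : ∃ a, w a ≠ 0 := by
        by_contra h
        push_neg at h
        simp [h] at hw1
      have hside : ∀ (σ : ℝ), σ = 1 ∨ σ = -1 →
          ∃ i, w i ≠ 0 ∧ σ * v i 0 ≤ σ * c := by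
        intro σ hσ
        by_contra h
        push_neg at h
        have hlt : ∑ a, w a * (σ * c) < ∑ a, w a * (σ * v a 0) := by
          apply Finset.sum_lt_sum
          · intro a _
            rcases eq_or_ne (w a) 0 with h0 | h0
            · simp [h0]
            · have := h a h0
              have hwa : 0 < w a := lt_of_le_of_ne (hw0 a) (Ne.symm h0)
              nlinarith
          · obtain ⟨a, ha⟩ := hex
            refine ⟨a, Finset.mem_univ a, ?_⟩
            have := h a ha
            have hwa : 0 < w a := lt_of_le_of_ne (hw0 a) (Ne.symm ha)
            nlinarith
        have h1 : ∑ a, w a * (σ * c) = σ * c := by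
          rw [← Finset.sum_mul, hw1, one_mul]
        have h2 : ∑ a, w a * (σ * v a 0) = σ * ∑ a, w a * v a 0 := by
          rw [Finset.mul_sum]; congr 1; ext a; ring
        rw [h1, h2, ← hpc 0, ← hc] at hlt
        linarith
      obtain ⟨i, hwi, hi⟩ := hside 1 (Or.inl rfl)
      obtain ⟨j, hwj, hj⟩ := hside (-1) (Or.inr rfl)
      simp only [one_mul] at hi
      have hj' : c ≤ v j 0 := by linarith [hj]
      clear hj
      have hwi' : 0 < w i := lt_of_le_of_ne (hw0 i) (Ne.symm hwi)
      have hwj' : 0 < w j := lt_of_le_of_ne (hw0 j) (Ne.symm hwj)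
      -- the crossing point q on segment [v i, v j] with x-coordinate c
      obtain ⟨s, hs⟩ : ∃ s : ℝ,
          s = if v j 0 = v i 0 then 1 else (v j 0 - c) / (v j 0 - v i 0) := ⟨_, rfl⟩
      have hs0 : 0 ≤ s := by
        rw [hs]
        split_ifs with h
        · norm_num
        · have : v i 0 < v j 0 := lt_of_le_of_ne (le_trans hi hj') (fun hh => h hh.symm)
          apply div_nonneg <;> linarith
      have hs1 : s ≤ 1 := by
        rw [hs]
        split_ifs with h
        · norm_num
        · have : v i 0 < v j 0 := lt_of_le_of_ne (le_trans hi hj') (fun hh => h hh.symm)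
          rw [div_le_one (by linarith)]
          linarith
      obtain ⟨q, hq⟩ : ∃ q : Plane, q = s • v i + (1 - s) • v j := ⟨_, rfl⟩
      have hqm : ∀ m, q m = s * v i m + (1 - s) * v j m := by
        intro m
        rw [hq, PiLp.add_apply, PiLp.smul_apply, PiLp.smul_apply, smul_eq_mul, smul_eq_mul]
      have hqseg : q ∈ segment ℝ (v i) (v j) :=
        ⟨s, 1 - s, hs0, by linarith, by ring, hq.symm⟩
      have hqT : q ∈ terrainRegion f := hvis i j hqseg
      have hq0 : q 0 = c := by
        rw [hqm 0, hs]
        split_ifs with h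
        · have : c = v i 0 := le_antisymm (h ▸ hj') hi
          rw [this]; ring
        · have hne : v j 0 - v i 0 ≠ 0 := fun hh => h (by linarith)
          field_simp
          ring
      have hiseq : i = j → s = 1 := by
        intro hij
        rw [hs]
        exact if_pos (by rw [hij])
      -- weights for q
      obtain ⟨u, hu⟩ : ∃ u : Fin k → ℝ,
          u = fun a => (if a = i then s else 0) + (if a = j then 1 - s else 0) := ⟨_, rfl⟩
      have hu1 : ∑ a, u a = 1 := by
        simp only [hu]
        rw [Finset.sum_add_distrib, Finset.sum_ite_eq', Finset.sum_ite_eq']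
        simp
      have huq : ∑ a, u a • v a = q := by
        ext m
        rw [coord_sum, hqm]
        simp only [hu, add_mul, ite_mul, zero_mul, Finset.sum_add_distrib,
          Finset.sum_ite_eq', Finset.mem_univ, if_true]
      -- choose how much of q to peel off
      obtain ⟨t, ht⟩ : ∃ t : ℝ,
          t = if w i * (1 - s) ≤ w j * s then w i / s else w j / (1 - s) := ⟨_, rfl⟩
      have hts : t * s ≤ w i ∧ t * (1 - s) ≤ w j ∧ 0 ≤ t ∧
          ((w i - t * s = 0) ∨ (w j - t * (1 - s) = 0 ∧ s < 1)) := by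
        rw [ht]
        split_ifs with h
        · have hspos : 0 < s := by
            rcases lt_or_eq_of_le hs0 with h' | h'
            · exact h'
            · exfalso; rw [← h'] at h; nlinarith
          refine ⟨?_, ?_, div_nonneg (le_of_lt hwi') hs0, Or.inl ?_⟩
          · rw [div_mul_cancel₀ _ hspos.ne']
          · rw [div_mul_eq_mul_div, div_le_iff₀ hspos]
            nlinarith
          · rw [div_mul_cancel₀ _ hspos.ne', sub_self]
        · push_neg at h
          have h1s : 0 < 1 - s := by nlinarith
          refine ⟨?_, ?_, div_nonneg (le_of_lt hwj') (le_of_lt h1s),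
            Or.inr ⟨?_, by linarith⟩⟩
          · rw [div_mul_eq_mul_div, div_le_iff₀ h1s]
            nlinarith
          · rw [div_mul_cancel₀ _ h1s.ne']
          · rw [div_mul_cancel₀ _ h1s.ne', sub_self]
      obtain ⟨hts1, hts2, ht0, htd⟩ := hts
      obtain ⟨w', hw'⟩ : ∃ w' : Fin k → ℝ, w' = fun a => w a - t * u a := ⟨_, rfl⟩
      have hw'0 : ∀ a, 0 ≤ w' a := by
        intro a
        simp only [hw', hu]
        rcases eq_or_ne a i with rfl | hai
        · rcases eq_or_ne a j with h | haj
          · have hs1' : s = 1 := hiseq h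
            rw [if_pos rfl, if_pos h, show s + (1 - s) = 1 by ring, mul_one]
            rw [hs1', mul_one] at hts1
            linarith
          · rw [if_pos rfl, if_neg haj, add_zero]
            linarith [hts1]
        · rcases eq_or_ne a j with rfl | haj
          · rw [if_neg hai, if_pos rfl, zero_add]
            linarith [hts2]
          · rw [if_neg hai, if_neg haj, add_zero, mul_zero, sub_zero]
            exact hw0 a
      have hw'sum : ∑ a, w' a = 1 - t := by
        simp only [hw']
        rw [Finset.sum_sub_distrib, hw1, ← Finset.mul_sum, hu1, mul_one]
      have ht1 : t ≤ 1 := by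
        have h0 : 0 ≤ ∑ a, w' a := Finset.sum_nonneg fun a _ => hw'0 a
        rw [hw'sum] at h0
        linarith
      have hw'v : ∑ a, w' a • v a = p - t • q := by
        rw [hp, ← huq, Finset.smul_sum, ← Finset.sum_sub_distrib]
        apply Finset.sum_congr rfl
        intro a _
        simp only [hw']
        rw [sub_smul, mul_smul]
      -- a support element disappears
      have hdrop : ∃ d, w d ≠ 0 ∧ w' d = 0 := by
        rcases htd with h | ⟨h, hslt⟩
        · refine ⟨i, hwi, ?_⟩
          simp only [hw']
          have hui : u i = s + (if i = j then 1 - s else 0) := by simp [hu]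
          rw [hui]
          rcases eq_or_ne i j with hij | hij
          · have hs1' : s = 1 := hiseq hij
            rw [if_pos hij, show s + (1 - s) = 1 by ring, mul_one]
            rw [hs1', mul_one] at h
            linarith
          · rw [if_neg hij, add_zero]
            linarith
        · refine ⟨j, hwj, ?_⟩
          have hij : i ≠ j := fun hij => by
            have := hiseq hij
            linarith
          simp only [hw']
          have huj : u j = 1 - s := by simp [hu, Ne.symm hij]
          rw [huj]
          linarith
      obtain ⟨d, hd1, hd2⟩ := hdrop
      have hsubset : (Finset.univ.filter fun a => w' a ≠ 0) ⊆
          (Finset.univ.filter fun a => w a ≠ 0).erase d := by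
        intro a ha
        simp only [Finset.mem_filter, Finset.mem_univ, true_and] at ha
        rw [Finset.mem_erase]
        constructor
        · rintro rfl; exact ha hd2
        · simp only [Finset.mem_filter, Finset.mem_univ, true_and]
          intro h0
          apply ha
          have hai : a ≠ i := by rintro rfl; exact hwi h0
          have haj : a ≠ j := by rintro rfl; exact hwj h0
          simp only [hw', hu]
          rw [if_neg hai, if_neg haj, h0]
          ring
      have hcard' : (Finset.univ.filter fun a => w' a ≠ 0).card ≤ n := by
        have h1 := Finset.card_le_card hsubset
        have hd : d ∈ Finset.univ.filter fun a => w a ≠ 0 := by simp [hd1]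
        have h2 := Finset.card_erase_of_mem hd
        have h3 := Finset.card_pos.mpr ⟨d, hd⟩
        omega
      rcases eq_or_lt_of_le ht1 with ht1' | ht1'
      · -- t = 1 : p = q
        have hallz : ∀ a ∈ Finset.univ, w' a = 0 :=
          (Finset.sum_eq_zero_iff_of_nonneg fun a _ => hw'0 a).mp
            (by rw [hw'sum, ← ht1']; ring)
        have hz : p - t • q = 0 := by
          rw [← hw'v]
          exact Finset.sum_eq_zero fun a ha => by rw [hallz a ha, zero_smul]
        have hpq : p = q := by
          have h2 : p = t • q := sub_eq_zero.mp hz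
          rw [h2, ht1', one_smul]
        rw [hpq]
        exact hqT
      · -- t < 1
        obtain ⟨w'', hw''⟩ : ∃ w'' : Fin k → ℝ, w'' = fun a => (1 - t)⁻¹ * w' a := ⟨_, rfl⟩
        have h1t : (0 : ℝ) < 1 - t := by linarith
        have hw''0 : ∀ a, 0 ≤ w'' a := fun a => by
          simp only [hw'']
          exact mul_nonneg (by positivity) (hw'0 a)
        have hw''1 : ∑ a, w'' a = 1 := by
          simp only [hw'']
          rw [← Finset.mul_sum, hw'sum]
          field_simp
        have hw''card : (Finset.univ.filter fun a => w'' a ≠ 0).card ≤ n := by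
          refine le_trans (Finset.card_le_card ?_) hcard'
          intro a ha
          simp only [Finset.mem_filter, Finset.mem_univ, true_and, hw''] at ha ⊢
          intro h0
          apply ha
          rw [h0, mul_zero]
        have hT'' := ih w'' hw''card hw''0 hw''1
        obtain ⟨p'', hp''⟩ : ∃ p'' : Plane, p'' = ∑ a, w'' a • v a := ⟨_, rfl⟩
        rw [← hp''] at hT''
        have hp''v : p'' = (1 - t)⁻¹ • (p - t • q) := by
          rw [hp'', ← hw'v, Finset.smul_sum]
          apply Finset.sum_congr rfl
          intro a _
          simp only [hw'']
          rw [mul_smul]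
        have hp''m : ∀ m, (1 - t) * p'' m = p m - t * q m := by
          intro m
          rw [hp''v, PiLp.smul_apply, PiLp.sub_apply, PiLp.smul_apply, smul_eq_mul,
            smul_eq_mul]
          field_simp
        have hp''0 : p'' 0 = c := by
          have h4 := hp''m 0
          rw [hq0, ← hc] at h4
          have h5 : (1 - t) * p'' 0 = (1 - t) * c := by rw [h4]; ring
          exact mul_left_cancel₀ h1t.ne' h5
        obtain ⟨hq1, hq2⟩ := hqT
        obtain ⟨hp1, hp2⟩ := hT''
        rw [hp''0] at hp2
        rw [hq0] at hq2
        have hpm1 := hp''m 1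
        refine ⟨?_, ?_⟩
        · show (0:ℝ) ≤ p 1
          linarith [mul_nonneg ht0 hq1, mul_nonneg h1t.le hp1, hpm1]
        · show p 1 ≤ f (p 0)
          rw [← hc]
          have hsum : t * f c + (1 - t) * f c = f c := by ring
          linarith [hpm1, mul_le_mul_of_nonneg_left hq2 ht0,
            mul_le_mul_of_nonneg_left hp2 h1t.le, hsum]

theorem pairwise_visible_polygon (f : ℝ → ℝ) (k : ℕ) (v : Fin k → Plane)
    (hvis : ∀ i j : Fin k, segment ℝ (v i) (v j) ⊆ terrainRegion f) :
    convexHull ℝ (Set.range v) ⊆ terrainRegion f := by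
  classical
  intro p hp
  rw [convexHull_range_eq_exists_affineCombination] at hp
  obtain ⟨sF, w, hw0, hw1, rfl⟩ := hp
  rw [Finset.affineCombination_eq_linear_combination sF v w hw1]
  obtain ⟨W, hW⟩ : ∃ W : Fin k → ℝ, W = fun a => if a ∈ sF then w a else 0 := ⟨_, rfl⟩
  have h1 : ∑ a ∈ sF, w a • v a = ∑ a, W a • v a := by
    simp only [hW, ite_smul, zero_smul, Finset.sum_ite_mem, Finset.univ_inter]
  rw [h1]
  apply key_step f k v hvis k W
  · exact le_trans (Finset.card_filter_le _ _) (by simp)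
  · intro a
    simp only [hW]
    split_ifs with h
    · exact hw0 a h
    · exact le_refl 0
  · simp only [hW]
    rw [Finset.sum_ite_mem, Finset.univ_inter, hw1]
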